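/- arXiv:2102.01379 — 2 statements merged into one kernel-verified Lean document; each statement's English description precedes it below -/
import Mathlib

section
/- Let α be a positive integer and β a nonnegative integer with β < α, and let {a_m}_{m≥1} be an arbitrary sequence of complex numbers. For every positive integer n, A(a,α,β;n) = ∑_{k=1}^{n} B(a,α,β;k) · p̄(n−k). -/
/-- An overpartition of `n`: a pair consisting of a multiset of overlined parts (pairwise
distinct) and a multiset of non-overlined parts, all parts positive, with total sum `n`. -/
structure Overpartition (n : ℕ) where
  overlined : Multiset ℕ
  nonoverlined : Multiset ℕ
  overlined_nodup : overlined.Nodup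
  overlined_pos : ∀ i ∈ overlined, 0 < i
  nonoverlined_pos : ∀ i ∈ nonoverlined, 0 < i
  parts_sum : overlined.sum + nonoverlined.sum = n

/-- There are only finitely many overpartitions of `n`. -/
instance (n : ℕ) : Finite (Overpartition n) := by
  classical
  set big : Multiset ℕ := n • ((Multiset.range (n + 1))) with hbig
  have key : ∀ (m : Multiset ℕ), (∀ i ∈ m, 0 < i) → m.sum ≤ n → m ≤ big := by
    intro m hpos hsum
    rw [Multiset.le_iff_count]
    intro a
    rw [hbig, Multiset.count_nsmul]
    by_cases ha : a ∈ m
    · have ha1 : 0 < a := hpos a ha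
      have hale : a ≤ m.sum := Multiset.le_sum_of_mem ha
      have hcard : m.card ≤ m.sum := by
        have := Multiset.card_nsmul_le_sum (s := m) (a := 1) (fun i hi => hpos i hi)
        simpa using this
      have hcnt : m.count a ≤ m.card := Multiset.count_le_card a m
      have haa : a ∈ Multiset.range (n + 1) := Multiset.mem_range.2 (by omega)
      have h1 : Multiset.count a (Multiset.range (n + 1)) = 1 :=
        Multiset.count_eq_one_of_mem (Multiset.nodup_range _) haa
      rw [h1]
      omega
    · simp [Multiset.count_eq_zero.2 ha]
  have hinj : Function.Injective (fun o : Overpartition n =>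
      ((⟨o.overlined, Multiset.mem_powerset.2
          (key _ o.overlined_pos (by have := o.parts_sum; omega))⟩,
        ⟨o.nonoverlined, Multiset.mem_powerset.2
          (key _ o.nonoverlined_pos (by have := o.parts_sum; omega))⟩) :
        {m // m ∈ big.powerset} × {m // m ∈ big.powerset})) := by
    intro a b h
    cases a; cases b
    simp_all
  exact Finite.of_injective _ hinj

/-- `S k n`: the total number of non-overlined parts equal to `k`, counted with
multiplicity, in all the overpartitions of `n`. -/
noncomputable def S (k n : ℕ) : ℕ := ∑ᶠ o : Overpartition n, o.nonoverlined.count k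

/-- `pbar n`: the number of overpartitions of `n` (`pbar 0 = 1`). -/
noncomputable def pbar (n : ℕ) : ℕ := Nat.card (Overpartition n)

/-- The multiset of all parts (overlined and non-overlined) of an overpartition. -/
def Overpartition.parts {n : ℕ} (o : Overpartition n) : Multiset ℕ :=
  o.overlined + o.nonoverlined

/-- `Mbar k n`: the number of overpartitions of `n` in which the first (i.e. largest) part
larger than `k` appears at least `k + 1` times. -/
noncomputable def Mbar (k n : ℕ) : ℕ :=
  Nat.card {o : Overpartition n // ∃ s ∈ o.parts, k < s ∧
    (∀ t ∈ o.parts, k < t → t ≤ s) ∧ k + 1 ≤ o.parts.count s}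

/-- `A a α β n = ∑_{k ≥ 1} S(αk - β, n) * a k`. -/
noncomputable def A (a : ℕ → ℂ) (α β n : ℕ) : ℂ :=
  ∑ᶠ k ∈ Set.Ici 1, (S (α * k - β) n : ℂ) * a k

/-- `A` extended to integer arguments: terms with negative argument are zero. -/
noncomputable def Az (a : ℕ → ℂ) (α β : ℕ) (m : ℤ) : ℂ :=
  if 0 ≤ m then A a α β m.toNat else 0

/-- `B a α β n = ∑_{d ≥ 1, (αd - β) ∣ n} a d`. -/
noncomputable def B (a : ℕ → ℂ) (α β n : ℕ) : ℂ :=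
  ∑ᶠ d ∈ {d : ℕ | 1 ≤ d ∧ (α * d - β) ∣ n}, a d

section Work

@[ext] lemma Overpartition.ext {n : ℕ} {o₁ o₂ : Overpartition n}
    (h1 : o₁.overlined = o₂.overlined) (h2 : o₁.nonoverlined = o₂.nonoverlined) : o₁ = o₂ := by
  cases o₁; cases o₂; simp_all

lemma count_mul_le_sum (m : ℕ) (s : Multiset ℕ) : s.count m * m ≤ s.sum := by
  have h : Multiset.replicate (s.count m) m ≤ s := Multiset.le_count_iff_replicate_le.mp le_rfl
  have h2 : s = Multiset.replicate (s.count m) m + (s - Multiset.replicate (s.count m) m) :=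
    (add_tsub_cancel_of_le h).symm
  have h3 := congrArg Multiset.sum h2
  rw [Multiset.sum_add, Multiset.sum_replicate, smul_eq_mul] at h3
  omega

/-- Bijection: overpartitions of `n` with at least `j` nonoverlined copies of `m`
correspond to overpartitions of `n - j*m`. -/
noncomputable def shiftEquiv (m n j : ℕ) (hm : 0 < m) (hjm : j * m ≤ n) :
    {o : Overpartition n // j ≤ o.nonoverlined.count m} ≃ Overpartition (n - j * m) where
  toFun o := ⟨o.1.overlined, o.1.nonoverlined - Multiset.replicate j m, o.1.overlined_nodup,
    o.1.overlined_pos,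
    fun i hi => o.1.nonoverlined_pos i (Multiset.mem_of_le (tsub_le_self) hi),
    by
      have hle : Multiset.replicate j m ≤ o.1.nonoverlined :=
        Multiset.le_count_iff_replicate_le.mp o.2
      have h1 := congrArg Multiset.sum (add_tsub_cancel_of_le hle).symm
      rw [Multiset.sum_add, Multiset.sum_replicate, smul_eq_mul] at h1
      have := o.1.parts_sum
      omega⟩
  invFun o := ⟨⟨o.overlined, o.nonoverlined + Multiset.replicate j m, o.overlined_nodup,
    o.overlined_pos,
    fun i hi => by
      rcases Multiset.mem_add.mp hi with h | h
      · exact o.nonoverlined_pos i h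
      · rw [Multiset.eq_of_mem_replicate h]; exact hm,
    by
      have := o.parts_sum
      rw [Multiset.sum_add, Multiset.sum_replicate, smul_eq_mul]
      omega⟩,
    by simp [Multiset.count_add, Multiset.count_replicate]⟩
  left_inv o := by
    have hle : Multiset.replicate j m ≤ o.1.nonoverlined :=
      Multiset.le_count_iff_replicate_le.mp o.2
    ext1
    ext <;> simp [tsub_add_cancel_of_le hle]
  right_inv o := by
    ext <;> simp

lemma card_ge_count (m n j : ℕ) (hm : 0 < m) (hjm : j * m ≤ n) :
    Nat.card {o : Overpartition n // j ≤ o.nonoverlined.count m} = pbar (n - j * m) :=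
  Nat.card_congr (shiftEquiv m n j hm hjm)

lemma card_ge_count_zero (m n j : ℕ) (hjm : n < j * m) :
    Nat.card {o : Overpartition n // j ≤ o.nonoverlined.count m} = 0 := by
  have : IsEmpty {o : Overpartition n // j ≤ o.nonoverlined.count m} := by
    constructor; rintro ⟨o, ho⟩
    have h1 := count_mul_le_sum m o.nonoverlined
    have h2 := o.parts_sum
    have h3 : j * m ≤ o.nonoverlined.count m * m := Nat.mul_le_mul_right _ ho
    omega
  simp [Nat.card_of_isEmpty]

lemma S_eq (m n : ℕ) (hm : 0 < m) :
    S m n = ∑ j ∈ Finset.Icc 1 n, (if j * m ≤ n then pbar (n - j * m) else 0) := by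
  classical
  have : Fintype (Overpartition n) := Fintype.ofFinite _
  rw [S, finsum_eq_sum_of_fintype]
  have key : ∀ o : Overpartition n, o.nonoverlined.count m
      = ∑ j ∈ Finset.Icc 1 n, (if j ≤ o.nonoverlined.count m then 1 else 0) := by
    intro o
    have h1 := count_mul_le_sum m o.nonoverlined
    have h2 := o.parts_sum
    have hc0 : o.nonoverlined.count m ≤ o.nonoverlined.count m * m :=
      Nat.le_mul_of_pos_right _ hm
    have hc : o.nonoverlined.count m ≤ n := by omega
    rw [← Finset.sum_filter]
    have : (Finset.Icc 1 n).filter (fun j => j ≤ o.nonoverlined.count m)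
        = Finset.Icc 1 (o.nonoverlined.count m) := by
      ext j; simp only [Finset.mem_filter, Finset.mem_Icc]; omega
    rw [this]
    simp
  rw [Finset.sum_congr rfl (fun o _ => key o), Finset.sum_comm]
  apply Finset.sum_congr rfl
  intro j _
  have hcard : ∑ o : Overpartition n, (if j ≤ o.nonoverlined.count m then 1 else 0)
      = Nat.card {o : Overpartition n // j ≤ o.nonoverlined.count m} := by
    rw [Nat.card_eq_fintype_card, Fintype.card_subtype, Finset.sum_boole]
    simp
  rw [hcard]
  by_cases h : j * m ≤ n
  · rw [card_ge_count m n j hm h, if_pos h]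
  · rw [card_ge_count_zero m n j (by omega), if_neg h]

lemma S_eq_zero (m n : ℕ) (hm : 0 < m) (hmn : n < m) : S m n = 0 := by
  rw [S_eq m n hm]
  apply Finset.sum_eq_zero
  intro j hj
  have hj1 : 1 ≤ j := (Finset.mem_Icc.mp hj).1
  have : n < j * m := by nlinarith
  rw [if_neg (by omega)]

lemma sum_pbar_reindex (m n : ℕ) (hm : 0 < m) :
    ∑ j ∈ (Finset.Icc 1 n).filter (fun j => j * m ≤ n), (pbar (n - j * m) : ℂ)
      = ∑ k ∈ (Finset.Icc 1 n).filter (fun k => m ∣ k), (pbar (n - k) : ℂ) := by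
  apply Finset.sum_nbij' (fun j => j * m) (fun k => k / m)
  · intro j hj
    simp only [Finset.mem_filter, Finset.mem_Icc] at hj ⊢
    exact ⟨⟨by nlinarith [hj.1.1], by omega⟩, dvd_mul_left m j⟩
  · intro k hk
    simp only [Finset.mem_filter, Finset.mem_Icc] at hk ⊢
    obtain ⟨⟨hk1, hk2⟩, c, hc⟩ := hk
    have hc' : k / m = c := by rw [hc]; exact Nat.mul_div_cancel_left c hm
    have hc1 : 1 ≤ c := by
      rcases Nat.eq_zero_or_pos c with h | h
      · rw [h, mul_zero] at hc; omega
      · exact h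
    have hc2 : c ≤ m * c := Nat.le_mul_of_pos_left c hm
    have hcm : c * m = m * c := mul_comm c m
    refine ⟨⟨?_, ?_⟩, ?_⟩ <;> rw [hc'] <;> omega
  · intro j hj
    simp only [Finset.mem_filter, Finset.mem_Icc] at hj
    exact Nat.mul_div_cancel j hm
  · intro k hk
    simp only [Finset.mem_filter, Finset.mem_Icc] at hk
    exact Nat.div_mul_cancel hk.2
  · intro j _; rfl

lemma alpha_lemma (α β d : ℕ) (hα : 0 < α) (hβ : β < α) (hd : 1 ≤ d) :
    d ≤ α * d - β ∧ 0 < α * d - β := by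
  obtain ⟨a', rfl⟩ : ∃ a', α = a' + 1 := ⟨α - 1, by omega⟩
  obtain ⟨d', rfl⟩ : ∃ d', d = d' + 1 := ⟨d - 1, by omega⟩
  have h : (a' + 1) * (d' + 1) = a' * d' + a' + d' + 1 := by ring
  omega

end Work

theorem stmt5' (α β : ℕ) (hα : 0 < α) (hβ : β < α) (a : ℕ → ℂ) (n : ℕ) (hn : 0 < n) :
    A a α β n = ∑ k ∈ Finset.Icc 1 n, B a α β k * (pbar (n - k) : ℂ) := by
  classical
  -- Step 1: A as a finite sum
  have hA : A a α β n = ∑ k ∈ Finset.Icc 1 n, (S (α * k - β) n : ℂ) * a k := by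
    rw [A]
    apply finsum_mem_eq_sum_of_subset
    · intro k hk
      obtain ⟨hk1, hk2⟩ := hk
      simp only [Set.mem_Ici] at hk1
      simp only [Finset.coe_Icc, Set.mem_Icc]
      refine ⟨hk1, ?_⟩
      by_contra h
      push_neg at h
      obtain ⟨hd, hp⟩ := alpha_lemma α β k hα hβ hk1
      have h0 : S (α * k - β) n = 0 := S_eq_zero _ _ hp (by omega)
      rw [Function.mem_support] at hk2
      exact hk2 (by simp [h0])
    · intro k hk
      simp only [Finset.coe_Icc, Set.mem_Icc] at hk
      exact hk.1
  -- Step 2: B as a finite sum, for 1 ≤ k ≤ n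
  have hB : ∀ k ∈ Finset.Icc 1 n, B a α β k
      = ∑ d ∈ (Finset.Icc 1 n).filter (fun d => (α * d - β) ∣ k), a d := by
    intro k hk
    rw [Finset.mem_Icc] at hk
    rw [B]
    have hset : {d : ℕ | 1 ≤ d ∧ (α * d - β) ∣ k}
        = ↑((Finset.Icc 1 n).filter (fun d => (α * d - β) ∣ k)) := by
      ext d
      simp only [Set.mem_setOf_eq, Finset.coe_filter, Finset.mem_Icc, Set.mem_setOf_eq]
      constructor
      · rintro ⟨hd1, hdvd⟩
        obtain ⟨hdle, hp⟩ := alpha_lemma α β d hα hβ hd1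
        have := Nat.le_of_dvd (by omega) hdvd
        exact ⟨⟨hd1, by omega⟩, hdvd⟩
      · rintro ⟨⟨hd1, _⟩, hdvd⟩
        exact ⟨hd1, hdvd⟩
    rw [hset, finsum_mem_coe_finset]
  have hB' : ∑ k ∈ Finset.Icc 1 n, B a α β k * (pbar (n - k) : ℂ)
      = ∑ k ∈ Finset.Icc 1 n,
        (∑ d ∈ (Finset.Icc 1 n).filter (fun d => (α * d - β) ∣ k), a d) * (pbar (n - k) : ℂ) :=
    Finset.sum_congr rfl (fun k hk => by rw [hB k hk])
  rw [hA, hB']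
  -- Step 3: swap sums
  have step3 : ∑ k ∈ Finset.Icc 1 n,
      (∑ d ∈ (Finset.Icc 1 n).filter (fun d => (α * d - β) ∣ k), a d) * (pbar (n - k) : ℂ)
      = ∑ d ∈ Finset.Icc 1 n, a d *
        ∑ k ∈ (Finset.Icc 1 n).filter (fun k => (α * d - β) ∣ k), (pbar (n - k) : ℂ) := by
    simp_rw [Finset.sum_filter, Finset.sum_mul, Finset.mul_sum]
    rw [Finset.sum_comm]
    apply Finset.sum_congr rfl
    intro d _
    apply Finset.sum_congr rfl
    intro k _
    by_cases h : (α * d - β) ∣ k <;> simp [h, mul_comm]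
  rw [step3]
  apply Finset.sum_congr rfl
  intro d hd
  rw [Finset.mem_Icc] at hd
  obtain ⟨hdle, hp⟩ := alpha_lemma α β d hα hβ hd.1
  rw [← sum_pbar_reindex (α * d - β) n hp]
  rw [S_eq (α * d - β) n hp]
  rw [← Finset.sum_filter]
  push_cast
  ring


theorem stmt5 (α β : ℕ) (hα : 0 < α) (hβ : β < α) (a : ℕ → ℂ) (n : ℕ) (hn : 0 < n) :
    A a α β n = ∑ k ∈ Finset.Icc 1 n, B a α β k * (pbar (n - k) : ℂ) := by
  exact stmt5' α β hα hβ a n hn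
end

section
/- For every positive integer n, A(φ,1,0;n) = ∑_{k=1}^{n} S(k,n)·φ(k) equals the sum of non-overlined parts counted without multiplicity in all the overpartitions of n, where φ is Euler's totient function. -/
noncomputable instance (n : ℕ) : Fintype (Overpartition n) := Fintype.ofFinite _

lemma Overpartition.ext' {n : ℕ} {a b : Overpartition n}
    (h1 : a.overlined = b.overlined) (h2 : a.nonoverlined = b.nonoverlined) : a = b := by
  cases a; cases b; simp_all

lemma part_le {n : ℕ} (o : Overpartition n) {s : ℕ} (hs : s ∈ o.nonoverlined) : s ≤ n := by
  have h1 : s ≤ o.nonoverlined.sum := Multiset.le_sum_of_mem hs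
  have := o.parts_sum
  omega

def addPart (m k : ℕ) (hk : 0 < k) (o : Overpartition m) : Overpartition (m + k) where
  overlined := o.overlined
  nonoverlined := k ::ₘ o.nonoverlined
  overlined_nodup := o.overlined_nodup
  overlined_pos := o.overlined_pos
  nonoverlined_pos := by
    intro i hi
    rcases Multiset.mem_cons.1 hi with h | h
    · omega
    · exact o.nonoverlined_pos i h
  parts_sum := by
    have := o.parts_sum
    simp only [Multiset.sum_cons]
    omega

def removePart (m k : ℕ) (o : {o : Overpartition (m + k) // k ∈ o.nonoverlined}) :
    Overpartition m where
  overlined := o.1.overlined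
  nonoverlined := o.1.nonoverlined.erase k
  overlined_nodup := o.1.overlined_nodup
  overlined_pos := o.1.overlined_pos
  nonoverlined_pos := fun i hi => o.1.nonoverlined_pos i (Multiset.mem_of_mem_erase hi)
  parts_sum := by
    have h1 := o.1.parts_sum
    have h2 : k + (o.1.nonoverlined.erase k).sum = o.1.nonoverlined.sum :=
      Multiset.sum_erase o.2
    omega

noncomputable def partEquiv (m k : ℕ) (hk : 0 < k) :
    Overpartition m ≃ {o : Overpartition (m + k) // k ∈ o.nonoverlined} where
  toFun o := ⟨addPart m k hk o, Multiset.mem_cons_self _ _⟩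
  invFun := removePart m k
  left_inv o := by
    apply Overpartition.ext'
    · rfl
    · exact Multiset.erase_cons_head _ _
  right_inv o := by
    apply Subtype.ext
    apply Overpartition.ext'
    · rfl
    · exact Multiset.cons_erase o.2

lemma pbar_card (n k : ℕ) (hk : 0 < k) (hkn : k ≤ n) :
    (Finset.univ.filter (fun o : Overpartition n => k ∈ o.nonoverlined)).card
      = pbar (n - k) := by
  classical
  obtain ⟨m, rfl⟩ : ∃ m, n = m + k := ⟨n - k, by omega⟩
  have : m + k - k = m := by omega
  rw [this, pbar, Nat.card_congr (partEquiv m k hk), Nat.card_eq_fintype_card,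
    Fintype.card_subtype]

lemma S_rec (m k : ℕ) (hk : 0 < k) : S k (m + k) = pbar m + S k m := by
  classical
  rw [S, finsum_eq_sum_of_fintype, S, finsum_eq_sum_of_fintype]
  have h0 : ∑ o : Overpartition (m + k), o.nonoverlined.count k
      = ∑ o ∈ Finset.univ.filter (fun o : Overpartition (m + k) => k ∈ o.nonoverlined),
          o.nonoverlined.count k := by
    rw [Finset.sum_filter_of_ne]
    intro o _ h
    exact Multiset.count_pos.1 (Nat.pos_of_ne_zero h)
  rw [h0, Finset.sum_subtype (p := fun o : Overpartition (m + k) => k ∈ o.nonoverlined)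
      (f := fun o : Overpartition (m + k) => o.nonoverlined.count k) _ (by simp)]
  rw [← Equiv.sum_comp (partEquiv m k hk)
      (fun o : {o : Overpartition (m + k) // k ∈ o.nonoverlined} => o.1.nonoverlined.count k)]
  have : ∀ o : Overpartition m,
      (((partEquiv m k hk) o).1.nonoverlined).count k = o.nonoverlined.count k + 1 := by
    intro o
    simp [partEquiv, addPart]
  simp only [this]
  rw [Finset.sum_add_distrib]
  simp [pbar, Nat.card_eq_fintype_card, add_comm]

lemma S_eq_zero_s9 (k n : ℕ) (h : n < k) : S k n = 0 := by
  rw [S, finsum_eq_sum_of_fintype]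
  apply Finset.sum_eq_zero
  intro o _
  rw [Multiset.count_eq_zero]
  intro hm
  exact absurd (part_le o hm) (by omega)

lemma S_formula (k : ℕ) (hk : 0 < k) (n : ℕ) :
    S k n = ∑ j ∈ Finset.Icc 1 (n / k), pbar (n - j * k) := by
  induction n using Nat.strong_induction_on with
  | _ n ih =>
    by_cases h : n < k
    · rw [S_eq_zero_s9 k n h, Nat.div_eq_of_lt h]
      simp
    · push_neg at h
      obtain ⟨m, rfl⟩ : ∃ m, n = m + k := ⟨n - k, by omega⟩
      rw [S_rec m k hk, ih m (by omega)]
      have hdiv : (m + k) / k = m / k + 1 := by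
        rw [Nat.add_div_right _ hk]
      rw [hdiv]
      have hmap : ∑ j ∈ Finset.Icc 1 (m / k), pbar (m - j * k)
          = ∑ j ∈ Finset.Icc 2 (m / k + 1), pbar (m + k - j * k) := by
        rw [show (2 : ℕ) = 1 + 1 from rfl, ← Finset.map_add_right_Icc 1 (m / k) 1,
          Finset.sum_map]
        apply Finset.sum_congr rfl
        intro j hj
        simp only [addRightEmbedding_apply]
        congr 1
        have hj2 : j * k ≤ m := by
          have h1 : j ≤ m / k := (Finset.mem_Icc.1 hj).2
          calc j * k ≤ (m / k) * k := Nat.mul_le_mul_right k h1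
          _ ≤ m := Nat.div_mul_le_self m k
        rw [add_mul, one_mul]
        omega
      have hins : ∀ t : ℕ, Finset.Icc 1 (t + 1) = insert 1 (Finset.Icc 2 (t + 1)) := by
        intro t
        ext x
        simp only [Finset.mem_Icc, Finset.mem_insert]
        omega
      rw [hmap, hins (m / k), Finset.sum_insert (by simp)]
      congr 1
      simp

theorem stmt9 (n : ℕ) (hn : 0 < n) :
    ∑ k ∈ Finset.Icc 1 n, S k n * Nat.totient k
      = ∑ᶠ o : Overpartition n, ∑ s ∈ o.nonoverlined.toFinset, s := by
  classical
  have hR : ∑ᶠ o : Overpartition n, ∑ s ∈ o.nonoverlined.toFinset, s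
      = ∑ m ∈ Finset.Icc 1 n, pbar (n - m) * m := by
    rw [finsum_eq_sum_of_fintype]
    have h1 : ∀ o : Overpartition n, ∑ s ∈ o.nonoverlined.toFinset, s
        = ∑ s ∈ Finset.Icc 1 n, if s ∈ o.nonoverlined then s else 0 := by
      intro o
      rw [← Finset.sum_filter]
      congr 1
      ext a
      simp only [Finset.mem_filter, Finset.mem_Icc, Multiset.mem_toFinset]
      constructor
      · intro ha
        exact ⟨⟨o.nonoverlined_pos a ha, part_le o ha⟩, ha⟩
      · exact fun h => h.2
    simp only [h1]
    rw [Finset.sum_comm]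
    apply Finset.sum_congr rfl
    intro s hs
    obtain ⟨hs1, hs2⟩ := Finset.mem_Icc.1 hs
    rw [← Finset.sum_filter, Finset.sum_const, smul_eq_mul, pbar_card n s hs1 hs2]
  have hform : ∀ k ∈ Finset.Icc 1 n, S k n * Nat.totient k
      = ∑ j ∈ Finset.Icc 1 n, if k * j ≤ n then pbar (n - k * j) * Nat.totient k else 0 := by
    intro k hk
    obtain ⟨hk1, hk2⟩ := Finset.mem_Icc.1 hk
    rw [S_formula k hk1 n, Finset.sum_mul, ← Finset.sum_filter]
    have hset : (Finset.Icc 1 n).filter (fun j => k * j ≤ n) = Finset.Icc 1 (n / k) := by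
      ext j
      simp only [Finset.mem_filter, Finset.mem_Icc]
      constructor
      · rintro ⟨⟨h1, h2⟩, h3⟩
        refine ⟨h1, (Nat.le_div_iff_mul_le hk1).2 ?_⟩
        rw [mul_comm]; exact h3
      · rintro ⟨h1, h2⟩
        have h3 : j * k ≤ n :=
          le_trans (Nat.mul_le_mul_right k h2) (Nat.div_mul_le_self n k)
        refine ⟨⟨h1, ?_⟩, by rw [mul_comm]; exact h3⟩
        calc j ≤ j * k := Nat.le_mul_of_pos_right j hk1
        _ ≤ n := h3
    rw [hset]
    apply Finset.sum_congr rfl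
    intro j hj
    rw [mul_comm k j]
  have hmm : ∀ m ∈ Finset.Icc 1 n, pbar (n - m) * m
      = ∑ p ∈ Finset.Icc 1 n ×ˢ Finset.Icc 1 n,
          if p.1 * p.2 = m then pbar (n - p.1 * p.2) * Nat.totient p.1 else 0 := by
    intro m hm
    obtain ⟨hm1, hm2⟩ := Finset.mem_Icc.1 hm
    rw [← Finset.sum_filter]
    have hset : (Finset.Icc 1 n ×ˢ Finset.Icc 1 n).filter (fun p => p.1 * p.2 = m)
        = m.divisorsAntidiagonal := by
      ext ⟨a, b⟩
      simp only [Finset.mem_filter, Finset.mem_product, Finset.mem_Icc,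
        Nat.mem_divisorsAntidiagonal]
      constructor
      · rintro ⟨_, h⟩
        exact ⟨h, by omega⟩
      · rintro ⟨h, _⟩
        have ha : 0 < a := by
          rcases Nat.eq_zero_or_pos a with h0 | h0
          · subst h0; simp at h; omega
          · exact h0
        have hb : 0 < b := by
          rcases Nat.eq_zero_or_pos b with h0 | h0
          · subst h0; simp at h; omega
          · exact h0
        have hab : a ≤ m := by
          calc a ≤ a * b := Nat.le_mul_of_pos_right a hb
          _ = m := h
        have hba : b ≤ m := by
          calc b ≤ a * b := Nat.le_mul_of_pos_left b ha
          _ = m := h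
        exact ⟨⟨⟨ha, by omega⟩, ⟨hb, by omega⟩⟩, h⟩
    rw [hset]
    have hc : ∀ p ∈ m.divisorsAntidiagonal,
        pbar (n - p.1 * p.2) * Nat.totient p.1 = pbar (n - m) * Nat.totient p.1 := by
      intro p hp
      have h := (Nat.mem_divisorsAntidiagonal.1 hp).1
      rw [h]
    rw [Finset.sum_congr rfl hc, ← Finset.mul_sum]
    congr 1
    rw [Nat.sum_divisorsAntidiagonal (fun i _ => Nat.totient i)]
    exact (Nat.sum_totient m).symm
  rw [hR]
  calc ∑ k ∈ Finset.Icc 1 n, S k n * Nat.totient k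
      = ∑ k ∈ Finset.Icc 1 n, ∑ j ∈ Finset.Icc 1 n,
          (if k * j ≤ n then pbar (n - k * j) * Nat.totient k else 0) :=
        Finset.sum_congr rfl hform
    _ = ∑ p ∈ Finset.Icc 1 n ×ˢ Finset.Icc 1 n,
          (if p.1 * p.2 ≤ n then pbar (n - p.1 * p.2) * Nat.totient p.1 else 0) :=
        (Finset.sum_product' (s := Finset.Icc 1 n) (t := Finset.Icc 1 n) (f := fun k j =>
          if k * j ≤ n then pbar (n - k * j) * Nat.totient k else 0)).symm
    _ = ∑ p ∈ Finset.Icc 1 n ×ˢ Finset.Icc 1 n, ∑ m ∈ Finset.Icc 1 n,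
          (if p.1 * p.2 = m then pbar (n - p.1 * p.2) * Nat.totient p.1 else 0) := by
        apply Finset.sum_congr rfl
        intro p hp
        rw [Finset.sum_ite_eq (Finset.Icc 1 n) (p.1 * p.2)
          (fun _ => pbar (n - p.1 * p.2) * Nat.totient p.1)]
        obtain ⟨hp1, hp2⟩ := Finset.mem_product.1 hp
        obtain ⟨h11, h12⟩ := Finset.mem_Icc.1 hp1
        obtain ⟨h21, h22⟩ := Finset.mem_Icc.1 hp2
        have hiff : p.1 * p.2 ∈ Finset.Icc 1 n ↔ p.1 * p.2 ≤ n := by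
          simp only [Finset.mem_Icc]
          constructor
          · exact fun h => h.2
          · intro h
            exact ⟨Nat.one_le_iff_ne_zero.2 (by positivity), h⟩
        by_cases hcase : p.1 * p.2 ≤ n
        · rw [if_pos hcase, if_pos (hiff.2 hcase)]
        · rw [if_neg hcase, if_neg (fun hmem => hcase (hiff.1 hmem))]
    _ = ∑ m ∈ Finset.Icc 1 n, ∑ p ∈ Finset.Icc 1 n ×ˢ Finset.Icc 1 n,
          (if p.1 * p.2 = m then pbar (n - p.1 * p.2) * Nat.totient p.1 else 0) :=
        Finset.sum_comm
    _ = ∑ m ∈ Finset.Icc 1 n, pbar (n - m) * m :=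
        (Finset.sum_congr rfl hmm).symm
end
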